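/- Let A be an N×N integer matrix with det(A) ≠ 0 such that no eigenvalue of A is a root of unity. Then a point P ∈ (Q̄^*)^N is preperiodic for the monomial map φ_A if and only if every coordinate of P is a root of unity. -/

import Mathlib

open Polynomial


/-- The monomial map associated to an integer matrix `A`: the `i`-th
coordinate of `monomialMap A P` is `∏ j, (P j) ^ (A i j)`. -/
def monomialMap {N : ℕ} {G : Type*} [CommGroup G]
    (A : Matrix (Fin N) (Fin N) ℤ) (P : Fin N → G) : Fin N → G :=
  fun i => ∏ j, P j ^ A i j

lemma zpow_sum_aux {G : Type*} [CommGroup G] (x : G) {ι : Type*} (s : Finset ι)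
    (f : ι → ℤ) : x ^ (∑ j ∈ s, f j) = ∏ j ∈ s, x ^ f j := by
  classical
  induction s using Finset.induction with
  | empty => simp
  | insert _ _ h ih => rw [Finset.sum_insert h, Finset.prod_insert h, zpow_add, ih]

lemma monomialMap_mul {N : ℕ} {G : Type*} [CommGroup G]
    (A B : Matrix (Fin N) (Fin N) ℤ) (P : Fin N → G) :
    monomialMap (A * B) P = monomialMap A (monomialMap B P) := by
  funext i
  simp only [monomialMap, Matrix.mul_apply]
  simp only [zpow_sum_aux]
  rw [Finset.prod_comm]
  refine Finset.prod_congr rfl fun j _ => ?_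
  rw [← Finset.prod_zpow]
  refine Finset.prod_congr rfl fun x _ => ?_
  rw [← zpow_mul, mul_comm]

lemma monomialMap_one {N : ℕ} {G : Type*} [CommGroup G] (P : Fin N → G) :
    monomialMap (1 : Matrix (Fin N) (Fin N) ℤ) P = P := by
  funext i
  simp only [monomialMap, Matrix.one_apply]
  rw [Finset.prod_eq_single i] <;> simp +contextual [Ne.symm]

lemma monomialMap_iterate {N : ℕ} {G : Type*} [CommGroup G]
    (A : Matrix (Fin N) (Fin N) ℤ) (P : Fin N → G) (n : ℕ) :
    (monomialMap A)^[n] P = monomialMap (A ^ n) P := by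
  induction n with
  | zero => simp [monomialMap_one]
  | succ n ih =>
      rw [Function.iterate_succ_apply', ih, pow_succ', monomialMap_mul]

/-- If `φ_B P = 1` with `det B ≠ 0`, then every coordinate of `P` satisfies
`P i ^ |det B| = 1`. -/
lemma monomialMap_eq_one {N : ℕ} {G : Type*} [CommGroup G]
    (B : Matrix (Fin N) (Fin N) ℤ) (P : Fin N → G)
    (h : monomialMap B P = 1) (i : Fin N) : P i ^ B.det.natAbs = 1 := by
  have h2 : monomialMap (B.adjugate * B) P = 1 := by
    rw [monomialMap_mul, h]
    funext j
    simp [monomialMap]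
  rw [Matrix.adjugate_mul] at h2
  have h3 : P i ^ B.det = 1 := by
    have := congrFun h2 i
    simp only [monomialMap, Matrix.smul_apply, Matrix.one_apply, smul_eq_mul] at this
    rw [Finset.prod_eq_single i (fun j _ hj => by simp [Ne.symm hj]) (by simp)] at this
    simpa using this
  rcases Int.natAbs_eq B.det with he | he
  · rw [← zpow_natCast, ← he, h3]
  · rw [← zpow_natCast, (by omega : (B.det.natAbs : ℤ) = -B.det), zpow_neg, h3, inv_one]

/-- If no eigenvalue of `A` over `ℂ` is a root of unity, then `det (A ^ k - 1) ≠ 0`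
for all `k > 0`. -/
lemma det_pow_sub_one_ne_zero {N : ℕ} (A : Matrix (Fin N) (Fin N) ℤ)
    (hnoroot : ∀ μ ∈ spectrum ℂ (A.map (Int.cast : ℤ → ℂ)),
      ∀ k : ℕ, 0 < k → μ ^ k ≠ 1)
    {k : ℕ} (hk : 0 < k) : (A ^ k - 1).det ≠ 0 := by
  rcases Nat.eq_zero_or_pos N with hN | hN
  · subst hN
    simp [Matrix.det_fin_zero]
  intro hzero
  have : Nonempty (Fin N) := Fin.pos_iff_nonempty.mp hN
  set M : Matrix (Fin N) (Fin N) ℂ := A.map (Int.cast : ℤ → ℂ) with hM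
  have hmap : (M ^ k - 1).det = 0 := by
    have hM' : M = (Int.castRingHom ℂ).mapMatrix A := rfl
    rw [hM', ← map_pow, ← map_one ((Int.castRingHom ℂ).mapMatrix), ← map_sub,
      ← RingHom.map_det, hzero]
    simp
  have hone : (1 : ℂ) ∈ spectrum ℂ (M ^ k) := by
    rw [spectrum.mem_iff]
    intro hu
    rw [Matrix.isUnit_iff_isUnit_det] at hu
    have : ((algebraMap ℂ _) 1 - M ^ k).det = 0 := by
      have : (algebraMap ℂ (Matrix (Fin N) (Fin N) ℂ)) 1 - M ^ k = -(M ^ k - 1) := by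
        simp [Algebra.algebraMap_eq_smul_one]
      rw [this, Matrix.det_neg, hmap, mul_zero]
    rw [this] at hu
    exact hu.ne_zero rfl
  rw [spectrum.map_pow_of_pos M hk] at hone
  obtain ⟨μ, hμ, hμk⟩ := hone
  exact hnoroot μ hμ k hk hμk

/-- If no complex eigenvalue of the integer matrix `A` (with `det A ≠ 0`) is a
root of unity, then a point `P ∈ (ℚ̄*)^N` is preperiodic for the monomial map
`φ_A` if and only if every coordinate of `P` is a root of unity. -/
theorem stmt13 {N : ℕ} (A : Matrix (Fin N) (Fin N) ℤ) (hdet : A.det ≠ 0)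
    (hnoroot : ∀ μ ∈ spectrum ℂ (A.map (Int.cast : ℤ → ℂ)),
      ∀ k : ℕ, 0 < k → μ ^ k ≠ 1)
    (P : Fin N → (AlgebraicClosure ℚ)ˣ) :
    (∃ m n : ℕ, m < n ∧ (monomialMap A)^[n] P = (monomialMap A)^[m] P) ↔
      ∀ i, ∃ k : ℕ, 0 < k ∧ P i ^ k = 1 := by
  constructor
  · rintro ⟨m, n, hmn, heq⟩ i
    rw [monomialMap_iterate, monomialMap_iterate] at heq
    set B : Matrix (Fin N) (Fin N) ℤ := A ^ n - A ^ m with hB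
    have hB1 : monomialMap B P = 1 := by
      funext j
      have := congrFun heq j
      simp only [monomialMap, hB, Matrix.sub_apply, Pi.one_apply] at this ⊢
      calc ∏ l, P l ^ ((A ^ n) j l - (A ^ m) j l)
          = (∏ l, P l ^ (A ^ n) j l) / ∏ l, P l ^ (A ^ m) j l := by
            rw [← Finset.prod_div_distrib]
            exact Finset.prod_congr rfl fun l _ => zpow_sub (P l) _ _
        _ = 1 := by rw [this, div_self']
    have hBdet : B.det ≠ 0 := by
      have hfac : B = A ^ m * (A ^ (n - m) - 1) := by
        rw [hB, mul_sub, mul_one, ← pow_add]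
        congr 1
        congr 1
        omega
      rw [hfac, Matrix.det_mul, Matrix.det_pow]
      exact mul_ne_zero (pow_ne_zero m hdet)
        (det_pow_sub_one_ne_zero A hnoroot (by omega))
    refine ⟨B.det.natAbs, by positivity, monomialMap_eq_one B P hB1 i⟩
  · intro h
    classical
    choose k hk hPk using h
    set K : ℕ := ∏ i, k i with hK
    have hKpos : 0 < K := Finset.prod_pos fun i _ => hk i
    have hPK : ∀ i, P i ^ K = 1 := fun i => by
      rw [hK, ← Finset.mul_prod_erase _ _ (Finset.mem_univ i), pow_mul, hPk i, one_pow]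
    -- the set of K-th roots of unity in the units is finite
    set T : Set (AlgebraicClosure ℚ)ˣ := {x | x ^ K = 1} with hT
    have hTfin : T.Finite := by
      have hpoly : (X ^ K - 1 : Polynomial (AlgebraicClosure ℚ)) ≠ 0 := by
        intro h0
        have := congrArg (Polynomial.eval 0) h0
        simp [zero_pow hKpos.ne'] at this
      have hroots : Set.Finite {x : AlgebraicClosure ℚ |
          (X ^ K - 1 : Polynomial (AlgebraicClosure ℚ)).IsRoot x} :=
        Polynomial.finite_setOf_isRoot hpoly
      have hinj : Set.InjOn (fun x : (AlgebraicClosure ℚ)ˣ => (x : AlgebraicClosure ℚ)) T :=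
        fun a _ b _ hab => Units.ext hab
      refine Set.Finite.of_finite_image (hroots.subset ?_) hinj
      rintro y ⟨x, hx, rfl⟩
      have : (x : AlgebraicClosure ℚ) ^ K = 1 := by
        rw [← Units.val_pow_eq_pow_val, hx, Units.val_one]
      simp [Polynomial.IsRoot, this]
    -- all iterates have coordinates in T
    have hiter : ∀ n : ℕ, ∀ i, (monomialMap A)^[n] P i ∈ T := by
      intro n i
      rw [monomialMap_iterate]
      show (∏ j, P j ^ (A ^ n) i j) ^ K = 1
      rw [← Finset.prod_pow]
      refine Finset.prod_eq_one fun j _ => ?_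
      rw [← zpow_natCast, ← zpow_mul, mul_comm, zpow_mul, zpow_natCast, hPK j, one_zpow]
    -- pigeonhole
    set S : Set (Fin N → (AlgebraicClosure ℚ)ˣ) := Set.pi Set.univ (fun _ => T) with hS
    have hSfin : S.Finite := Set.Finite.pi fun _ => hTfin
    have : Finite S := hSfin.to_subtype
    have hf : ∀ n : ℕ, (monomialMap A)^[n] P ∈ S := fun n =>
      Set.mem_pi.mpr fun i _ => hiter n i
    obtain ⟨m, n, hmn, heq⟩ : ∃ m n : ℕ, m ≠ n ∧
        (⟨(monomialMap A)^[m] P, hf m⟩ : S) = ⟨(monomialMap A)^[n] P, hf n⟩ := by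
      obtain ⟨m, n, hmn, heq⟩ := Finite.exists_ne_map_eq_of_infinite
        (fun n : ℕ => (⟨(monomialMap A)^[n] P, hf n⟩ : S))
      exact ⟨m, n, hmn, heq⟩
    have heq' : (monomialMap A)^[m] P = (monomialMap A)^[n] P := by
      simpa using congrArg Subtype.val heq
    rcases hmn.lt_or_gt with h | h
    · exact ⟨m, n, h, heq'.symm⟩
    · exact ⟨n, m, h, heq'⟩
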